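/- Energy decay for the time-discrete model (Corollary 4.1): assume the data are time-independent (ℓ^k = ℓ, g^k = g), and let (u^k, φ^k) ∈ (g + V) × Ψ, k = 0, …, N, be the solution of the time-discrete model. Then the discrete energies E^k := E(u^k, φ^k) are monotone nonincreasing: E^k ≤ E^{k−1} for all k = 1, …, N. -/
import Mathlib


open scoped RealInnerProductSpace

/-- Energy decay for the time-discrete model (Corollary 4.1): for the solution of
the time-discrete model with time-independent data, the discrete energies
`Eᵏ := E(uᵏ, φᵏ)` are monotone nonincreasing. -/
theorem stmt_11
    {X Ψ : Type*}
    [NormedAddCommGroup X] [InnerProductSpace ℝ X] [CompleteSpace X]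
    [NormedAddCommGroup Ψ] [InnerProductSpace ℝ Ψ] [CompleteSpace Ψ]
    (V : Submodule ℝ X) (hV : IsClosed (V : Set X))
    (e : X →L[ℝ] Ψ) (C : Ψ →L[ℝ] Ψ)
    (hCsym : ∀ φ ψ : Ψ, ⟪C φ, ψ⟫ = ⟪φ, C ψ⟫)
    (cstar : ℝ) (hcstar : 0 < cstar)
    (hCcoer : ∀ ψ : Ψ, cstar * ‖ψ‖ ^ 2 ≤ ⟪C ψ, ψ⟫)
    (c₀ : ℝ) (hc₀ : 0 < c₀)
    (hacoer : ∀ v ∈ V, c₀ * ‖v‖ ^ 2 ≤ ⟪C (e v), e v⟫)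
    (ℓ : X →L[ℝ] ℝ) (g : X) (η α : ℝ) (hη : 0 < η) (hα : 0 ≤ α)
    (τ : ℝ) (hτ : 0 < τ) (N : ℕ)
    (E : X → Ψ → ℝ)
    (hE : ∀ u φ, E u φ =
      (1 / 2) * ⟪C (e u - φ), e u - φ⟫ + (α / 2) * ‖φ‖ ^ 2 - ℓ u)
    (u : ℕ → X) (φ : ℕ → Ψ)
    (hmem : ∀ k ≤ N, u k - g ∈ V)
    (heq1 : ∀ k ≤ N, ∀ v ∈ V, ⟪C (e (u k) - φ k), e v⟫ = ℓ v)
    (heq2 : ∀ k, 1 ≤ k → k ≤ N →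
      (η / τ) • (φ k - φ (k - 1)) + α • φ k - C (e (u k) - φ k) = 0) :
    ∀ k, 1 ≤ k → k ≤ N → E (u k) (φ k) ≤ E (u (k - 1)) (φ (k - 1)) := by

  intro k hk1 hkN
  have hk1N : k - 1 ≤ N := le_trans (Nat.sub_le k 1) hkN
  rw [hE, hE]
  set ψ := e (u k) - φ k with hψ
  set ψ' := e (u (k-1)) - φ (k-1) with hψ'
  set d := φ k - φ (k-1) with hd
  set w := u k - u (k-1) with hw
  have hwV : w ∈ V := by
    have h1 := hmem k hkN
    have h2 := hmem (k-1) hk1N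
    have := V.sub_mem h1 h2
    simpa [hw, sub_sub_sub_cancel_right] using this
  have hlw : ⟪C ψ, e w⟫ = ℓ w := heq1 k hkN w hwV
  have hCψ : C ψ = (η / τ) • d + α • φ k := (sub_eq_zero.mp (heq2 k hk1 hkN)).symm
  have hsymm : ⟪C ψ, ψ'⟫ = ⟪C ψ', ψ⟫ := by rw [hCsym]; exact real_inner_comm _ _
  have key1 : ⟪C ψ, ψ⟫ - ⟪C ψ', ψ'⟫ = 2 * ⟪C ψ, ψ - ψ'⟫ - ⟪C (ψ - ψ'), ψ - ψ'⟫ := by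
    simp only [map_sub, inner_sub_left, inner_sub_right]
    linarith
  have hsub : ψ - ψ' = e w - d := by
    rw [hψ, hψ', hw, hd, map_sub]; abel
  have key2 : ⟪C ψ, ψ - ψ'⟫ = ℓ w - ((η/τ) * ‖d‖^2 + α * ⟪φ k, d⟫) := by
    rw [hsub, inner_sub_right, hlw]
    have : ⟪C ψ, d⟫ = (η/τ) * ‖d‖^2 + α * ⟪φ k, d⟫ := by
      rw [hCψ, inner_add_left, real_inner_smul_left, real_inner_smul_left,
        real_inner_self_eq_norm_sq]
    rw [this]
  have key3 : ‖φ k‖^2 - ‖φ (k-1)‖^2 = 2*⟪φ k, d⟫ - ‖d‖^2 := by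
    have h : φ (k-1) = φ k - d := by rw [hd]; abel
    rw [h, norm_sub_sq_real]; ring
  have hB : 0 ≤ ⟪C (ψ - ψ'), ψ - ψ'⟫ :=
    le_trans (by positivity) (hCcoer _)
  have hℓ : ℓ (u k) - ℓ (u (k-1)) = ℓ w := (map_sub ℓ _ _).symm
  have h1 : 0 ≤ (η/τ) * ‖d‖^2 :=
    mul_nonneg (div_nonneg hη.le hτ.le) (sq_nonneg _)
  have h2 : 0 ≤ α * ‖d‖^2 := mul_nonneg hα (sq_nonneg _)
  have key3' : (α/2) * ‖φ k‖^2 - (α/2) * ‖φ (k-1)‖^2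
      = α * ⟪φ k, d⟫ - (α/2) * ‖d‖^2 := by linear_combination (α/2) * key3
  linarith
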